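/- Let Q be the symmetric integer 6×6 matrix with rows (2,1,1,1,1,1), (1,0,1,0,0,1), (1,1,0,1,0,0), (1,0,1,0,1,0), (1,0,0,1,0,1), (1,1,0,0,1,0), and let T be the permutation matrix fixing the first standard basis vector of ℤ^6 and cyclically permuting the remaining five. Then: (i) vᵀ Q v ∈ 2ℤ for every v ∈ ℤ^6 (Q is even); (ii) Tᵀ Q T = Q (the form is invariant under the order-5 action of T); (iii) there exists U ∈ GL_6(ℤ) with Uᵀ Q U equal to the block diagonal matrix H ⊕ H ⊕ H, where H = [[0,1],[1,0]] (in particular Q is unimodular); (iv) the sublattice {v ∈ ℤ^6 : Tv = v} has rank 2 and the restriction of the form Q to it is indefinite and nondegenerate over ℝ, of signature (1,1). -/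

import Mathlib

open Matrix

/-- The matrix `Q` of Lemma 4.3 with respect to the basis `{f, e, ge, g²e, g³e, g⁴e}`. -/
def Qmat : Matrix (Fin 6) (Fin 6) ℤ :=
  !![2, 1, 1, 1, 1, 1;
     1, 0, 1, 0, 0, 1;
     1, 1, 0, 1, 0, 0;
     1, 0, 1, 0, 1, 0;
     1, 0, 0, 1, 0, 1;
     1, 1, 0, 0, 1, 0]

/-- The permutation matrix fixing the first standard basis vector of `ℤ⁶` and cyclically
permuting the remaining five. -/
def Tmat : Matrix (Fin 6) (Fin 6) ℤ :=
  !![1, 0, 0, 0, 0, 0;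
     0, 0, 0, 0, 0, 1;
     0, 1, 0, 0, 0, 0;
     0, 0, 1, 0, 0, 0;
     0, 0, 0, 1, 0, 0;
     0, 0, 0, 0, 1, 0]

/-- The orthogonal sum `H ⊕ H ⊕ H` of three hyperbolic planes `H = [[0,1],[1,0]]`. -/
def HHHmat : Matrix (Fin 6) (Fin 6) ℤ :=
  !![0, 1, 0, 0, 0, 0;
     1, 0, 0, 0, 0, 0;
     0, 0, 0, 1, 0, 0;
     0, 0, 1, 0, 0, 0;
     0, 0, 0, 0, 0, 1;
     0, 0, 0, 0, 1, 0]

/-- An explicit change of basis bringing `Q` to `H ⊕ H ⊕ H`. -/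
def Umat : Matrix (Fin 6) (Fin 6) ℤ :=
  !![-1, 1, -1, 0, 0, 3;
     -1, 1, -1, 0, 1, 1;
     -1, 1, 0, 0, 1, 1;
     1, -1, 1, 1, 0, -2;
     0, -1, 1, 0, 0, -2;
     1, -2, 1, -1, -1, -3]

/-- The inverse of `Umat`. -/
def Vmat : Matrix (Fin 6) (Fin 6) ℤ :=
  !![0, 0, 1, 1, -2, 1;
     -2, -1, -1, -2, 1, -2;
     0, -1, 1, 0, 0, 0;
     0, 0, -1, 0, 1, -1;
     1, 1, 2, 2, -2, 2;
     1, 0, 1, 1, -1, 1]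

/-- The product `Qmat * Umat`. -/
def Wmat : Matrix (Fin 6) (Fin 6) ℤ :=
  !![-2, 0, 0, 0, 1, 1;
     -1, 0, 0, -1, 0, 1;
     -1, 1, -1, 1, 1, 2;
     -2, 1, 0, 0, 1, 2;
     1, -2, 1, 0, -1, -2;
     -2, 1, -1, 0, 1, 2]

/-- The inclusion of the fixed lattice of `T` into `ℤ⁶`. -/
def FixT : Matrix (Fin 6) (Fin 2) ℤ :=
  fun i j => if i = 0 then (if j = 0 then 1 else 0) else (if j = 0 then 0 else 1)

/-- The first fixed vector. -/
def w1 : Fin 6 → ℤ := fun i => if i = 0 then 1 else 0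

/-- The second fixed vector. -/
def w2 : Fin 6 → ℤ := fun i => if i = 0 then 0 else 1

/-- A fixed vector of negative square. -/
def w3 : Fin 6 → ℤ := fun i => if i = 0 then -3 else 1


lemma qe00 : Qmat 0 0 = 2 := rfl
lemma qe01 : Qmat 0 1 = 1 := rfl
lemma qe02 : Qmat 0 2 = 1 := rfl
lemma qe03 : Qmat 0 3 = 1 := rfl
lemma qe04 : Qmat 0 4 = 1 := rfl
lemma qe05 : Qmat 0 5 = 1 := rfl
lemma qe10 : Qmat 1 0 = 1 := rfl
lemma qe11 : Qmat 1 1 = 0 := rfl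
lemma qe12 : Qmat 1 2 = 1 := rfl
lemma qe13 : Qmat 1 3 = 0 := rfl
lemma qe14 : Qmat 1 4 = 0 := rfl
lemma qe15 : Qmat 1 5 = 1 := rfl
lemma qe20 : Qmat 2 0 = 1 := rfl
lemma qe21 : Qmat 2 1 = 1 := rfl
lemma qe22 : Qmat 2 2 = 0 := rfl
lemma qe23 : Qmat 2 3 = 1 := rfl
lemma qe24 : Qmat 2 4 = 0 := rfl
lemma qe25 : Qmat 2 5 = 0 := rfl
lemma qe30 : Qmat 3 0 = 1 := rfl
lemma qe31 : Qmat 3 1 = 0 := rfl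
lemma qe32 : Qmat 3 2 = 1 := rfl
lemma qe33 : Qmat 3 3 = 0 := rfl
lemma qe34 : Qmat 3 4 = 1 := rfl
lemma qe35 : Qmat 3 5 = 0 := rfl
lemma qe40 : Qmat 4 0 = 1 := rfl
lemma qe41 : Qmat 4 1 = 0 := rfl
lemma qe42 : Qmat 4 2 = 0 := rfl
lemma qe43 : Qmat 4 3 = 1 := rfl
lemma qe44 : Qmat 4 4 = 0 := rfl
lemma qe45 : Qmat 4 5 = 1 := rfl
lemma qe50 : Qmat 5 0 = 1 := rfl
lemma qe51 : Qmat 5 1 = 1 := rfl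
lemma qe52 : Qmat 5 2 = 0 := rfl
lemma qe53 : Qmat 5 3 = 0 := rfl
lemma qe54 : Qmat 5 4 = 1 := rfl
lemma qe55 : Qmat 5 5 = 0 := rfl
lemma te00 : Tmat 0 0 = 1 := rfl
lemma te01 : Tmat 0 1 = 0 := rfl
lemma te02 : Tmat 0 2 = 0 := rfl
lemma te03 : Tmat 0 3 = 0 := rfl
lemma te04 : Tmat 0 4 = 0 := rfl
lemma te05 : Tmat 0 5 = 0 := rfl
lemma te10 : Tmat 1 0 = 0 := rfl
lemma te11 : Tmat 1 1 = 0 := rfl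
lemma te12 : Tmat 1 2 = 0 := rfl
lemma te13 : Tmat 1 3 = 0 := rfl
lemma te14 : Tmat 1 4 = 0 := rfl
lemma te15 : Tmat 1 5 = 1 := rfl
lemma te20 : Tmat 2 0 = 0 := rfl
lemma te21 : Tmat 2 1 = 1 := rfl
lemma te22 : Tmat 2 2 = 0 := rfl
lemma te23 : Tmat 2 3 = 0 := rfl
lemma te24 : Tmat 2 4 = 0 := rfl
lemma te25 : Tmat 2 5 = 0 := rfl
lemma te30 : Tmat 3 0 = 0 := rfl
lemma te31 : Tmat 3 1 = 0 := rfl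
lemma te32 : Tmat 3 2 = 1 := rfl
lemma te33 : Tmat 3 3 = 0 := rfl
lemma te34 : Tmat 3 4 = 0 := rfl
lemma te35 : Tmat 3 5 = 0 := rfl
lemma te40 : Tmat 4 0 = 0 := rfl
lemma te41 : Tmat 4 1 = 0 := rfl
lemma te42 : Tmat 4 2 = 0 := rfl
lemma te43 : Tmat 4 3 = 1 := rfl
lemma te44 : Tmat 4 4 = 0 := rfl
lemma te45 : Tmat 4 5 = 0 := rfl
lemma te50 : Tmat 5 0 = 0 := rfl
lemma te51 : Tmat 5 1 = 0 := rfl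
lemma te52 : Tmat 5 2 = 0 := rfl
lemma te53 : Tmat 5 3 = 0 := rfl
lemma te54 : Tmat 5 4 = 1 := rfl
lemma te55 : Tmat 5 5 = 0 := rfl

lemma mem_fixed (v : Fin 6 → ℤ) (h : Tmat.mulVec v = v) :
    v 1 = v 2 ∧ v 2 = v 3 ∧ v 3 = v 4 ∧ v 4 = v 5 := by
  have h1 := congrFun h 1
  have h2 := congrFun h 2
  have h3 := congrFun h 3
  have h4 := congrFun h 4
  have h5 := congrFun h 5
  simp [mulVec, dotProduct, Fin.sum_univ_six, te00, te01, te02, te03, te04, te05, te10, te11, te12, te13, te14, te15, te20, te21, te22, te23, te24, te25, te30, te31, te32, te33, te34, te35, te40, te41, te42, te43, te44, te45, te50, te51, te52, te53, te54, te55] at h1 h2 h3 h4 h5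
  omega

/-- Lemma 4.3 : the form `Q` is even, invariant under the order-5 action of `T`,
equivalent over `ℤ` to `H ⊕ H ⊕ H` (in particular unimodular), and its restriction to the
rank-2 fixed sublattice of `T` is indefinite and nondegenerate, of signature `(1,1)`. -/
theorem stmt6 :
    (∀ v : Fin 6 → ℤ, ∃ a : ℤ, v ⬝ᵥ Qmat.mulVec v = 2 * a) ∧
    (Tmatᵀ * Qmat * Tmat = Qmat ∧ Tmat ^ 5 = 1) ∧
    (∃ U : Matrix (Fin 6) (Fin 6) ℤ, IsUnit U.det ∧ Uᵀ * Qmat * U = HHHmat) ∧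
    (Module.finrank ℤ
        (LinearMap.ker (Tmat.mulVecLin - (LinearMap.id : (Fin 6 → ℤ) →ₗ[ℤ] Fin 6 → ℤ))) = 2 ∧
      (∃ v : Fin 6 → ℤ, Tmat.mulVec v = v ∧ 0 < v ⬝ᵥ Qmat.mulVec v) ∧
      (∃ w : Fin 6 → ℤ, Tmat.mulVec w = w ∧ w ⬝ᵥ Qmat.mulVec w < 0) ∧
      (∀ v : Fin 6 → ℤ, Tmat.mulVec v = v →
        (∀ w : Fin 6 → ℤ, Tmat.mulVec w = w → v ⬝ᵥ Qmat.mulVec w = 0) → v = 0)) := by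
  have hUV : Umat * Vmat = 1 := by decide
  have hQU : Qmat * Umat = Wmat := by decide
  have hUW : Umatᵀ * Wmat = HHHmat := by decide
  refine ⟨?_, ⟨by decide, by decide⟩, ⟨Umat, ?_, ?_⟩, ?_, ⟨w1, by decide, by decide⟩,
    ⟨w3, by decide, by decide⟩, ?_⟩
  · -- evenness
    intro v
    refine ⟨v 0 * v 0 + v 0 * (v 1 + v 2 + v 3 + v 4 + v 5)
      + v 1 * v 2 + v 1 * v 5 + v 2 * v 3 + v 3 * v 4 + v 4 * v 5, ?_⟩
    simp [mulVec, dotProduct, Fin.sum_univ_six, qe00, qe01, qe02, qe03, qe04, qe05, qe10, qe11, qe12, qe13, qe14, qe15, qe20, qe21, qe22, qe23, qe24, qe25, qe30, qe31, qe32, qe33, qe34, qe35, qe40, qe41, qe42, qe43, qe44, qe45, qe50, qe51, qe52, qe53, qe54, qe55]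
    ring
  · -- Umat is invertible
    exact IsUnit.of_mul_eq_one (a := Umat.det) Vmat.det
      (by rw [← Matrix.det_mul, hUV, Matrix.det_one])
  · rw [Matrix.mul_assoc, hQU, hUW]
  · -- rank of the fixed lattice
    have hker : LinearMap.ker (Tmat.mulVecLin - (LinearMap.id : (Fin 6 → ℤ) →ₗ[ℤ] Fin 6 → ℤ))
        = LinearMap.range FixT.mulVecLin := by
      ext v
      simp only [LinearMap.mem_ker, LinearMap.sub_apply, LinearMap.id_apply,
        Matrix.mulVecLin_apply, sub_eq_zero, LinearMap.mem_range]
      constructor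
      · intro h
        obtain ⟨e1, e2, e3, e4⟩ := mem_fixed v h
        refine ⟨![v 0, v 1], ?_⟩
        funext i
        fin_cases i <;>
          simp [FixT, mulVec, dotProduct, Fin.sum_univ_two] <;> omega
      · rintro ⟨c, rfl⟩
        rw [Matrix.mulVec_mulVec, show Tmat * FixT = FixT from by decide]
    rw [hker]
    have hinj : Function.Injective FixT.mulVecLin := by
      intro x y hxy
      have h0 := congrFun hxy 0
      have h1 := congrFun hxy 1
      simp [FixT, mulVec, dotProduct, Fin.sum_univ_two] at h0 h1
      funext i
      fin_cases i <;> simp <;> [exact h0; exact h1]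
    have e : (Fin 2 → ℤ) ≃ₗ[ℤ] LinearMap.range FixT.mulVecLin :=
      LinearEquiv.ofInjective FixT.mulVecLin hinj
    rw [← e.finrank_eq]
    simp
  · -- nondegeneracy
    intro v hv horth
    obtain ⟨e1, e2, e3, e4⟩ := mem_fixed v hv
    have h1 := horth w1 (by decide)
    have h2 := horth w2 (by decide)
    simp [w1, w2, mulVec, dotProduct, Fin.sum_univ_six, qe00, qe01, qe02, qe03, qe04, qe05, qe10, qe11, qe12, qe13, qe14, qe15, qe20, qe21, qe22, qe23, qe24, qe25, qe30, qe31, qe32, qe33, qe34, qe35, qe40, qe41, qe42, qe43, qe44, qe45, qe50, qe51, qe52, qe53, qe54, qe55] at h1 h2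
    funext i
    fin_cases i <;> simp <;> omega
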